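/- Let P : C^op → InfSL be an elementary doctrine and Q(P) : Q_P^op → InfSL its elementary quotient completion, defined by Q(P)(A,ρ) = Des(ρ) and Q(P)([f]) = P(f). Then Q(P) is well defined (independent of representatives and landing in descent data), is an elementary doctrine with fibered equality δ_{(A,ρ)} = ρ, and has effective quotients: for any Q(P)-equivalence relation σ on (A,ρ), the arrow [id_A] : (A,ρ) → (A,σ) is an effective quotient arrow. -/

import Mathlib

open CategoryTheory CategoryTheory.Limits Opposite

noncomputable section

universe w v u

namespace DoctrinePaper

variable {C : Type u} [Category.{v} C] [HasFiniteProducts C]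

/-- The fiber of a primary doctrine `P : Cᵒᵖ ⥤ SemilatInfCat` over an object `A`. -/
abbrev Fib (P : Cᵒᵖ ⥤ SemilatInfCat.{w}) (A : C) : Type w :=
  ↥(P.obj (op A))

/-- Reindexing along an arrow `f : A ⟶ B`. -/
def rmap (P : Cᵒᵖ ⥤ SemilatInfCat.{w}) {A B : C} (f : A ⟶ B) :
    Fib P B → Fib P A :=
  fun x => (P.map f.op) x

variable (P : Cᵒᵖ ⥤ SemilatInfCat.{w})

/-- An elementary doctrine: fibered equalities `δ A ∈ P (A ⨯ A)` such that
`E_e(α) = P⟨pr1,pr2⟩(α) ⊓ P⟨pr2,pr3⟩(δ A)` is left adjoint to reindexing along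
`e = ⟨pr1,pr2,pr2⟩ : X ⨯ A ⟶ (X ⨯ A) ⨯ A`. -/
structure IsElementary where
  δ : ∀ A : C, Fib P (A ⨯ A)
  adj :
    ∀ (X A : C) (α : Fib P (X ⨯ A)) (β : Fib P ((X ⨯ A) ⨯ A)),
      (rmap P (prod.fst : (X ⨯ A) ⨯ A ⟶ X ⨯ A) α ⊓
          rmap P (prod.lift (prod.fst ≫ prod.snd) prod.snd : (X ⨯ A) ⨯ A ⟶ A ⨯ A) (δ A) ≤ β)
        ↔ α ≤ rmap P (prod.lift (𝟙 (X ⨯ A)) prod.snd : X ⨯ A ⟶ (X ⨯ A) ⨯ A) β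

/-- A `P`-equivalence relation over `A`. -/
structure IsEqRel (hE : IsElementary P) {A : C} (ρ : Fib P (A ⨯ A)) : Prop where
  refl : hE.δ A ≤ ρ
  symm : ρ = rmap P (prod.lift prod.snd prod.fst : A ⨯ A ⟶ A ⨯ A) ρ
  trans :
    rmap P (prod.fst : (A ⨯ A) ⨯ A ⟶ A ⨯ A) ρ ⊓
        rmap P (prod.lift (prod.fst ≫ prod.snd) prod.snd : (A ⨯ A) ⨯ A ⟶ A ⨯ A) ρ ≤
      rmap P (prod.lift (prod.fst ≫ prod.fst) prod.snd : (A ⨯ A) ⨯ A ⟶ A ⨯ A) ρ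

/-- An elementary existential doctrine, together with the induced left adjoints
`∃_f` along all arrows, satisfying the adjunction law, Frobenius reciprocity, and
the Beck–Chevalley condition along pullbacks of projections. -/
structure IsExistential extends IsElementary P where
  E : ∀ {A B : C}, (A ⟶ B) → Fib P A → Fib P B
  adjE : ∀ {A B : C} (f : A ⟶ B) (α : Fib P A) (β : Fib P B),
    E f α ≤ β ↔ α ≤ rmap P f β
  frobenius : ∀ {A B : C} (f : A ⟶ B) (α : Fib P A) (β : Fib P B),
    E f (α ⊓ rmap P f β) = E f α ⊓ β
  beckChevalley : ∀ {B A A' : C} (f : A' ⟶ A) (β : Fib P (B ⨯ A)),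
    E (prod.snd : B ⨯ A' ⟶ A') (rmap P (prod.map (𝟙 B) f) β) =
      rmap P f (E (prod.snd : B ⨯ A ⟶ A) β)

/-- Descent data for a relation `ρ` over `A`. -/
def Des {A : C} (ρ : Fib P (A ⨯ A)) : Set (Fib P A) :=
  {α | rmap P (prod.fst : A ⨯ A ⟶ A) α ⊓ ρ ≤ rmap P (prod.snd : A ⨯ A ⟶ A) α}

/-- Comprehensive diagonals: `f = g` iff `⊤ = P⟨f,g⟩(δ)`. -/
def ComprehensiveDiagonals (hE : IsElementary P) : Prop :=
  ∀ {X A : C} (f g : X ⟶ A), f = g ↔ rmap P (prod.lift f g) (hE.δ A) = ⊤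

/-- (Weak) comprehension structure. -/
structure Comprehension where
  cObj : ∀ {A : C}, Fib P A → C
  cArr : ∀ {A : C} (α : Fib P A), cObj α ⟶ A
  cTop : ∀ {A : C} (α : Fib P A), rmap P (cArr α) α = ⊤
  cUniv : ∀ {A : C} (α : Fib P A) {Y : C} (f : Y ⟶ A),
    rmap P f α = ⊤ → ∃ k : Y ⟶ cObj α, k ≫ cArr α = f

/-- Full comprehension. -/
def Comprehension.Full (hC : Comprehension P) : Prop :=
  ∀ {A : C} (α β : Fib P A), α ≤ β ↔ rmap P (hC.cArr α) β = ⊤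

/-- Strong comprehension: comprehension arrows are monic. -/
def Comprehension.Strong (hC : Comprehension P) : Prop :=
  ∀ {A : C} (α : Fib P A), Mono (hC.cArr α)

/-- `P`-injective arrow. -/
def PInj (hE : IsElementary P) {X A : C} (f : X ⟶ A) : Prop :=
  rmap P (prod.map f f) (hE.δ A) = hE.δ X

/-- `P`-surjective arrow. -/
def PSurj (hEx : IsExistential P) {X A : C} (f : X ⟶ A) : Prop :=
  hEx.E f (⊤ : Fib P X) = ⊤

/-- The product relation `ρ ⊠ σ` on `(A ⨯ B) ⨯ (A ⨯ B)`. -/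
def boxprod {A B : C} (ρ : Fib P (A ⨯ A)) (σ : Fib P (B ⨯ B)) :
    Fib P ((A ⨯ B) ⨯ (A ⨯ B)) :=
  rmap P (prod.map prod.fst prod.fst) ρ ⊓ rmap P (prod.map prod.snd prod.snd) σ

/-- The hom condition of the elementary quotient completion: `f : A ⟶ B`
represents an arrow `(A,ρ) ⟶ (B,σ)` iff `ρ ≤ P(f×f)(σ)`. -/
def QHomC {A B : C} (ρ : Fib P (A ⨯ A)) (σ : Fib P (B ⨯ B)) (f : A ⟶ B) : Prop :=
  ρ ≤ rmap P (prod.map f f) σ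

/-- The equivalence on representatives: `f ∼ g` iff `⊤ = P⟨f,g⟩(σ)`. -/
def QEq {A B : C} (σ : Fib P (B ⨯ B)) (f g : A ⟶ B) : Prop :=
  rmap P (prod.lift f g) σ = ⊤

section Aux

set_option linter.unusedSectionVars false

theorem rmap_comp {A B D : C} (f : A ⟶ B) (g : B ⟶ D) (x : Fib P D) :
    rmap P (f ≫ g) x = rmap P f (rmap P g x) := by
  simp only [rmap, op_comp, P.map_comp]; rfl

theorem rmap_id {A : C} (x : Fib P A) : rmap P (𝟙 A) x = x := by
  simp only [rmap, op_id, P.map_id]; rfl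

theorem rmap_inf {A B : C} (f : A ⟶ B) (x y : Fib P B) :
    rmap P f (x ⊓ y) = rmap P f x ⊓ rmap P f y :=
  map_inf (show InfTopHom _ _ from P.map f.op) x y

theorem rmap_top {A B : C} (f : A ⟶ B) : rmap P f (⊤ : Fib P B) = ⊤ :=
  map_top (show InfTopHom _ _ from P.map f.op)

theorem rmap_mono {A B : C} (f : A ⟶ B) {x y : Fib P B} (h : x ≤ y) :
    rmap P f x ≤ rmap P f y :=
  OrderHomClass.mono (show InfTopHom _ _ from P.map f.op) h

/-- `P⟨g,g⟩(δ A) = ⊤`. -/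
theorem diag_top (hE : IsElementary P) {Y A : C} (g : Y ⟶ A) :
    rmap P (prod.lift g g) (hE.δ A) = ⊤ := by
  have key : rmap P (prod.lift prod.snd prod.snd : Y ⨯ A ⟶ A ⨯ A) (hE.δ A) = ⊤ := by
    have h := (hE.adj Y A ⊤
      (rmap P (prod.fst : (Y ⨯ A) ⨯ A ⟶ Y ⨯ A) ⊤ ⊓
        rmap P (prod.lift (prod.fst ≫ prod.snd) prod.snd : (Y ⨯ A) ⨯ A ⟶ A ⨯ A)
          (hE.δ A))).mp le_rfl
    rw [rmap_inf, ← rmap_comp, ← rmap_comp] at h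
    have e1 : (prod.lift (𝟙 (Y ⨯ A)) prod.snd ≫ prod.fst) = 𝟙 (Y ⨯ A) := by simp [prod.lift_fst, prod.lift_snd, prod.lift_fst_assoc, prod.lift_snd_assoc, prod.map_fst, prod.map_snd, prod.map_fst_assoc, prod.map_snd_assoc]
    have e2 : (prod.lift (𝟙 (Y ⨯ A)) prod.snd ≫
        prod.lift (prod.fst ≫ prod.snd) prod.snd : Y ⨯ A ⟶ A ⨯ A)
        = prod.lift prod.snd prod.snd := by ext <;> simp [prod.lift_fst, prod.lift_snd, prod.lift_fst_assoc, prod.lift_snd_assoc, prod.map_fst, prod.map_snd, prod.map_fst_assoc, prod.map_snd_assoc]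
    rw [e1, e2, rmap_top] at h
    exact eq_top_iff.mpr (le_trans h inf_le_right)
  have e : (prod.lift g g : Y ⟶ A ⨯ A)
      = prod.lift (𝟙 Y) g ≫ (prod.lift prod.snd prod.snd : Y ⨯ A ⟶ A ⨯ A) := by
    ext <;> simp [prod.lift_fst, prod.lift_snd, prod.lift_fst_assoc, prod.lift_snd_assoc, prod.map_fst, prod.map_snd, prod.map_fst_assoc, prod.map_snd_assoc]
  rw [e, rmap_comp, key, rmap_top]

/-- `P⟨g,g⟩(ρ) = ⊤` for any `ρ` above the diagonal. -/
theorem diag_top' (hE : IsElementary P) {A : C} {ρ : Fib P (A ⨯ A)}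
    (href : hE.δ A ≤ ρ) {Y : C} (g : Y ⟶ A) :
    rmap P (prod.lift g g) ρ = ⊤ :=
  eq_top_iff.mpr (by rw [← diag_top P hE g]; exact rmap_mono P _ href)

/-- Symmetry of an equivalence relation, in generalized-element form. -/
theorem eqrel_symm_lift (hE : IsElementary P) {A : C} {ρ : Fib P (A ⨯ A)}
    (hρ : IsEqRel P hE ρ) {Y : C} (a b : Y ⟶ A) :
    rmap P (prod.lift a b) ρ = rmap P (prod.lift b a) ρ := by
  conv_lhs => rw [hρ.symm]
  rw [← rmap_comp]
  congr 1
  ext <;> simp [prod.lift_fst, prod.lift_snd, prod.lift_fst_assoc, prod.lift_snd_assoc, prod.map_fst, prod.map_snd, prod.map_fst_assoc, prod.map_snd_assoc]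

/-- Transitivity of an equivalence relation, in generalized-element form. -/
theorem eqrel_trans_lift (hE : IsElementary P) {A : C} {ρ : Fib P (A ⨯ A)}
    (hρ : IsEqRel P hE ρ) {Y : C} (a b c : Y ⟶ A) :
    rmap P (prod.lift a b) ρ ⊓ rmap P (prod.lift b c) ρ ≤ rmap P (prod.lift a c) ρ := by
  have h := rmap_mono P (prod.lift (prod.lift a b) c) hρ.trans
  rw [rmap_inf, ← rmap_comp, ← rmap_comp, ← rmap_comp] at h
  have e1 : (prod.lift (prod.lift a b) c ≫ prod.fst) = prod.lift a b := by simp [prod.lift_fst, prod.lift_snd, prod.lift_fst_assoc, prod.lift_snd_assoc, prod.map_fst, prod.map_snd, prod.map_fst_assoc, prod.map_snd_assoc]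
  have e2 : (prod.lift (prod.lift a b) c ≫
      prod.lift (prod.fst ≫ prod.snd) prod.snd : Y ⟶ A ⨯ A) = prod.lift b c := by
    ext <;> simp [prod.lift_fst, prod.lift_snd, prod.lift_fst_assoc, prod.lift_snd_assoc, prod.map_fst, prod.map_snd, prod.map_fst_assoc, prod.map_snd_assoc]
  have e3 : (prod.lift (prod.lift a b) c ≫
      prod.lift (prod.fst ≫ prod.fst) prod.snd : Y ⟶ A ⨯ A) = prod.lift a c := by
    ext <;> simp [prod.lift_fst, prod.lift_snd, prod.lift_fst_assoc, prod.lift_snd_assoc, prod.map_fst, prod.map_snd, prod.map_fst_assoc, prod.map_snd_assoc]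
  rw [e1, e2, e3] at h
  exact h

/-- Pullback of a descent condition along a pair of generalized elements. -/
theorem des_pull {A : C} {ρ : Fib P (A ⨯ A)} {β : Fib P A} (hβ : β ∈ Des P ρ)
    {Y : C} (u v : Y ⟶ A) :
    rmap P u β ⊓ rmap P (prod.lift u v) ρ ≤ rmap P v β := by
  have hβ' : rmap P (prod.fst : A ⨯ A ⟶ A) β ⊓ ρ ≤ rmap P (prod.snd : A ⨯ A ⟶ A) β := hβ
  have h := rmap_mono P (prod.lift u v) hβ'
  rw [rmap_inf, ← rmap_comp, ← rmap_comp] at h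
  simpa [prod.lift_fst, prod.lift_snd, prod.lift_fst_assoc, prod.lift_snd_assoc, prod.map_fst, prod.map_snd, prod.map_fst_assoc, prod.map_snd_assoc] using h

end Aux

/-- The elementary quotient completion `Q(P)`, with
`Q(P)(A,ρ) = Des ρ` and reindexing by representatives, is well defined, is an
elementary doctrine with fibered equality `δ_{(A,ρ)} = ρ`, and has effective
quotients given by `[id] : (A,ρ) ⟶ (A,σ)`. -/
theorem quotient_completion_doctrine (hE : IsElementary P) :
    (∀ {A B : C} (ρ : Fib P (A ⨯ A)) (σ : Fib P (B ⨯ B)),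
      IsEqRel P hE ρ → IsEqRel P hE σ →
      ∀ f g : A ⟶ B, QHomC P ρ σ f → QHomC P ρ σ g → QEq P σ f g →
        ∀ β ∈ Des P σ, rmap P f β = rmap P g β) ∧
    (∀ {A B : C} (ρ : Fib P (A ⨯ A)) (σ : Fib P (B ⨯ B)),
      IsEqRel P hE ρ → IsEqRel P hE σ →
      ∀ f : A ⟶ B, QHomC P ρ σ f → ∀ β ∈ Des P σ, rmap P f β ∈ Des P ρ) ∧
    (∀ {A : C} (ρ : Fib P (A ⨯ A)), IsEqRel P hE ρ → ρ ∈ Des P (boxprod P ρ ρ)) ∧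
    (∀ {X A : C} (θ : Fib P (X ⨯ X)) (ρ : Fib P (A ⨯ A)),
      IsEqRel P hE θ → IsEqRel P hE ρ →
      ∀ (α : Fib P (X ⨯ A)) (β : Fib P ((X ⨯ A) ⨯ A)),
        α ∈ Des P (boxprod P θ ρ) → β ∈ Des P (boxprod P (boxprod P θ ρ) ρ) →
        ((rmap P (prod.fst : (X ⨯ A) ⨯ A ⟶ X ⨯ A) α ⊓
            rmap P (prod.lift (prod.fst ≫ prod.snd) prod.snd :
              (X ⨯ A) ⨯ A ⟶ A ⨯ A) ρ ≤ β)
          ↔ α ≤ rmap P (prod.lift (𝟙 (X ⨯ A)) prod.snd : X ⨯ A ⟶ (X ⨯ A) ⨯ A) β)) ∧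
    (∀ {A : C} (ρ σ : Fib P (A ⨯ A)), IsEqRel P hE ρ → IsEqRel P hE σ → ρ ≤ σ →
      σ ∈ Des P (boxprod P ρ ρ) →
      (σ = rmap P (prod.map (𝟙 A) (𝟙 A)) σ) ∧
      ∀ {B : C} (τ : Fib P (B ⨯ B)), IsEqRel P hE τ →
        ∀ f : A ⟶ B, QHomC P σ τ f →
          ∃ h : A ⟶ B, QHomC P σ τ h ∧ QEq P τ h f ∧
            ∀ h' : A ⟶ B, QHomC P σ τ h' → QEq P τ h' f → QEq P τ h h') := by
  refine ⟨?_, ?_, ?_, ?_, ?_⟩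
  · -- well-definedness on representatives
    intro A B ρ σ hρ hσ f g hf hg hfg β hβ
    have hfg' : rmap P (prod.lift f g) σ = ⊤ := hfg
    have hgf' : rmap P (prod.lift g f) σ = ⊤ := by
      rw [eqrel_symm_lift P hE hσ g f]; exact hfg'
    have h1 := des_pull P hβ f g
    have h2 := des_pull P hβ g f
    rw [hfg', inf_top_eq] at h1
    rw [hgf', inf_top_eq] at h2
    exact le_antisymm h1 h2
  · -- reindexing lands in descent data
    intro A B ρ σ hρ hσ f hf β hβ
    show rmap P (prod.fst : A ⨯ A ⟶ A) (rmap P f β) ⊓ ρ ≤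
      rmap P (prod.snd : A ⨯ A ⟶ A) (rmap P f β)
    have h := des_pull P hβ (prod.fst ≫ f : A ⨯ A ⟶ B) (prod.snd ≫ f)
    rw [rmap_comp, rmap_comp] at h
    have e : (prod.lift (prod.fst ≫ f) (prod.snd ≫ f) : A ⨯ A ⟶ B ⨯ B)
        = prod.map f f := by ext <;> simp [prod.lift_fst, prod.lift_snd, prod.lift_fst_assoc, prod.lift_snd_assoc, prod.map_fst, prod.map_snd, prod.map_fst_assoc, prod.map_snd_assoc]
    rw [e] at h
    exact le_trans (inf_le_inf_left _ hf) h
  · -- the fibered equality is descent data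
    intro A ρ hρ
    show rmap P (prod.fst : (A ⨯ A) ⨯ (A ⨯ A) ⟶ A ⨯ A) ρ ⊓ boxprod P ρ ρ ≤
      rmap P (prod.snd : (A ⨯ A) ⨯ (A ⨯ A) ⟶ A ⨯ A) ρ
    set a : (A ⨯ A) ⨯ (A ⨯ A) ⟶ A := prod.fst ≫ prod.fst with ha
    set b : (A ⨯ A) ⨯ (A ⨯ A) ⟶ A := prod.fst ≫ prod.snd with hb
    set a' : (A ⨯ A) ⨯ (A ⨯ A) ⟶ A := prod.snd ≫ prod.fst with ha'
    set b' : (A ⨯ A) ⨯ (A ⨯ A) ⟶ A := prod.snd ≫ prod.snd with hb'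
    have e1 : (prod.fst : (A ⨯ A) ⨯ (A ⨯ A) ⟶ A ⨯ A) = prod.lift a b := by
      rw [ha, hb]; ext <;> simp [prod.lift_fst, prod.lift_snd, prod.lift_fst_assoc, prod.lift_snd_assoc, prod.map_fst, prod.map_snd, prod.map_fst_assoc, prod.map_snd_assoc]
    have e2 : (prod.map prod.fst prod.fst : (A ⨯ A) ⨯ (A ⨯ A) ⟶ A ⨯ A)
        = prod.lift a a' := by rw [ha, ha']; ext <;> simp [prod.lift_fst, prod.lift_snd, prod.lift_fst_assoc, prod.lift_snd_assoc, prod.map_fst, prod.map_snd, prod.map_fst_assoc, prod.map_snd_assoc]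
    have e3 : (prod.map prod.snd prod.snd : (A ⨯ A) ⨯ (A ⨯ A) ⟶ A ⨯ A)
        = prod.lift b b' := by rw [hb, hb']; ext <;> simp [prod.lift_fst, prod.lift_snd, prod.lift_fst_assoc, prod.lift_snd_assoc, prod.map_fst, prod.map_snd, prod.map_fst_assoc, prod.map_snd_assoc]
    have e4 : (prod.snd : (A ⨯ A) ⨯ (A ⨯ A) ⟶ A ⨯ A) = prod.lift a' b' := by
      rw [ha', hb']; ext <;> simp [prod.lift_fst, prod.lift_snd, prod.lift_fst_assoc, prod.lift_snd_assoc, prod.map_fst, prod.map_snd, prod.map_fst_assoc, prod.map_snd_assoc]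
    rw [boxprod, e1, e2, e3, e4, eqrel_symm_lift P hE hρ a a']
    have t1 := eqrel_trans_lift P hE hρ a' a b
    have t2 := eqrel_trans_lift P hE hρ a' b b'
    exact le_trans
      (le_inf (le_inf (inf_le_right.trans inf_le_left) inf_le_left)
        (inf_le_right.trans inf_le_right))
      (le_trans (inf_le_inf_right _ t1) t2)
  · -- the adjunction of the elementary structure of Q(P)
    intro X A θ ρ hθ hρ α β hα hβ
    constructor
    · intro h
      exact (hE.adj X A α β).mp
        (le_trans (inf_le_inf_left _ (rmap_mono P _ hρ.refl)) h)
    · intro h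
      have hd := des_pull P hβ
        (prod.lift prod.fst (prod.fst ≫ prod.snd) : (X ⨯ A) ⨯ A ⟶ (X ⨯ A) ⨯ A)
        (𝟙 ((X ⨯ A) ⨯ A))
      rw [rmap_id] at hd
      set u : (X ⨯ A) ⨯ A ⟶ (X ⨯ A) ⨯ A :=
        prod.lift prod.fst (prod.fst ≫ prod.snd) with hu
      -- compute the pullback of the box relation
      have c1 : (prod.lift u (𝟙 ((X ⨯ A) ⨯ A)) ≫
          prod.map prod.fst prod.fst : (X ⨯ A) ⨯ A ⟶ (X ⨯ A) ⨯ (X ⨯ A))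
          = prod.lift prod.fst prod.fst := by rw [hu]; ext <;> simp [prod.lift_fst, prod.lift_snd, prod.lift_fst_assoc, prod.lift_snd_assoc, prod.map_fst, prod.map_snd, prod.map_fst_assoc, prod.map_snd_assoc]
      have c2 : (prod.lift u (𝟙 ((X ⨯ A) ⨯ A)) ≫
          prod.map prod.snd prod.snd : (X ⨯ A) ⨯ A ⟶ A ⨯ A)
          = prod.lift (prod.fst ≫ prod.snd) prod.snd := by rw [hu]; ext <;> simp [prod.lift_fst, prod.lift_snd, prod.lift_fst_assoc, prod.lift_snd_assoc, prod.map_fst, prod.map_snd, prod.map_fst_assoc, prod.map_snd_assoc]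
      have c3 : (prod.lift (prod.fst : (X ⨯ A) ⨯ A ⟶ X ⨯ A) prod.fst ≫
          prod.map prod.fst prod.fst : (X ⨯ A) ⨯ A ⟶ X ⨯ X)
          = prod.lift (prod.fst ≫ prod.fst) (prod.fst ≫ prod.fst) := by
        ext <;> simp [prod.lift_fst, prod.lift_snd, prod.lift_fst_assoc, prod.lift_snd_assoc, prod.map_fst, prod.map_snd, prod.map_fst_assoc, prod.map_snd_assoc]
      have c4 : (prod.lift (prod.fst : (X ⨯ A) ⨯ A ⟶ X ⨯ A) prod.fst ≫
          prod.map prod.snd prod.snd : (X ⨯ A) ⨯ A ⟶ A ⨯ A)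
          = prod.lift (prod.fst ≫ prod.snd) (prod.fst ≫ prod.snd) := by
        ext <;> simp [prod.lift_fst, prod.lift_snd, prod.lift_fst_assoc, prod.lift_snd_assoc, prod.map_fst, prod.map_snd, prod.map_fst_assoc, prod.map_snd_assoc]
      have ebox : rmap P (prod.lift u (𝟙 ((X ⨯ A) ⨯ A)))
          (boxprod P (boxprod P θ ρ) ρ)
          = ⊤ ⊓ rmap P (prod.lift (prod.fst ≫ prod.snd) prod.snd :
              (X ⨯ A) ⨯ A ⟶ A ⨯ A) ρ := by
        rw [boxprod, rmap_inf, ← rmap_comp, ← rmap_comp, c1, c2]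
        congr 1
        rw [boxprod, rmap_inf, ← rmap_comp, ← rmap_comp, c3, c4,
          diag_top' P hE hθ.refl, diag_top' P hE hρ.refl, inf_top_eq]
      rw [ebox, top_inf_eq] at hd
      -- rmap u β dominates rmap pr1 α
      have eu : u = (prod.fst : (X ⨯ A) ⨯ A ⟶ X ⨯ A) ≫
          prod.lift (𝟙 (X ⨯ A)) prod.snd := by rw [hu]; ext <;> simp [prod.lift_fst, prod.lift_snd, prod.lift_fst_assoc, prod.lift_snd_assoc, prod.map_fst, prod.map_snd, prod.map_fst_assoc, prod.map_snd_assoc]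
      have hub : rmap P (prod.fst : (X ⨯ A) ⨯ A ⟶ X ⨯ A) α ≤ rmap P u β := by
        rw [eu, rmap_comp]
        exact rmap_mono P _ h
      exact le_trans (inf_le_inf_right _ hub) hd
  · -- effective quotients
    intro A ρ σ hρ hσ hle hdes
    refine ⟨?_, ?_⟩
    · rw [prod.map_id_id, rmap_id]
    · intro B τ hτ f hf
      refine ⟨f, hf, diag_top' P hE hτ.refl f, ?_⟩
      intro h' hh' hfeq
      show rmap P (prod.lift f h') τ = ⊤
      rw [eqrel_symm_lift P hE hτ f h']
      exact hfeq

end DoctrinePaper
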